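/- Let n, t be natural numbers with 1 ≤ t < n, let s : Fin n → ℝ be nonnegative, and call a nonnegative vector v : Fin n → ℝ 'feasible' if for every j ∈ Fin n and every subset A ⊆ Fin n with |A| = t and j ∉ A, one has ∑_{i ∉ A} v i ≥ s j. If v is feasible and v̂ is obtained from v by a permutation of its entries such that v̂ is arranged in the same relative order as s (i.e., v̂ i ≥ v̂ j whenever s i ≥ s j, with v̂ a rearrangement of v), then v̂ is also feasible. -/

import Mathlib

theorem stmt0 (n t : ℕ) (ht : 1 ≤ t) (htn : t < n)
    (s v : Fin n → ℝ) (hs : ∀ i, 0 ≤ s i) (hv : ∀ i, 0 ≤ v i)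
    (hfeas : ∀ (j : Fin n) (A : Finset (Fin n)), A.card = t → j ∉ A →
      s j ≤ ∑ i ∈ Aᶜ, v i)
    (σ : Equiv.Perm (Fin n)) (vh : Fin n → ℝ) (hperm : vh = v ∘ σ)
    (hmono : ∀ i j : Fin n, s j ≤ s i → vh j ≤ vh i) :
    ∀ (j : Fin n) (A : Finset (Fin n)), A.card = t → j ∉ A →
      s j ≤ ∑ i ∈ Aᶜ, vh i := by
  classical
  subst hperm
  intro j A hA hjA
  set C : Finset (Fin n) := Aᶜ with hC
  have hjC : j ∈ C := Finset.mem_compl.2 hjA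
  have hCcard : C.card = n - t := by
    rw [hC, Finset.card_compl, hA]; simp
  set D : Finset (Fin n) := C.image σ with hD
  have hDcard : D.card = n - t := by
    rw [hD, Finset.card_image_of_injective _ σ.injective, hCcard]
  have hσjD : σ j ∈ D := Finset.mem_image_of_mem σ hjC
  have hsum : ∑ i ∈ C, (v ∘ σ) i = ∑ k ∈ D, v k := by
    rw [hD, Finset.sum_image]
    · rfl
    · intro x _ y _ h; exact σ.injective h
  rw [show (∑ i ∈ Aᶜ, (v ∘ σ) i) = ∑ k ∈ D, v k from hsum]
  -- find j' with s j ≤ s j' and v j' ≤ v (σ j)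
  have hex : ∃ m, 1 ≤ m ∧ s j ≤ s ((σ ^ m) j) := by
    refine ⟨orderOf σ, orderOf_pos σ, ?_⟩
    rw [pow_orderOf_eq_one σ]; simp
  set k := Nat.find hex with hk
  obtain ⟨hk1, hks⟩ := Nat.find_spec hex
  set j' := (σ ^ k) j with hj'
  have hvj' : v j' ≤ v (σ j) := by
    rcases eq_or_lt_of_le hk1 with h1 | h1
    · have hkk : k = 1 := by rw [hk, ← h1]
      rw [hj', hkk, pow_one]
    · have hmin := Nat.find_min hex (m := k - 1) (by omega)
      push_neg at hmin
      have hs' : s ((σ ^ (k - 1)) j) ≤ s j := (hmin (by omega)).le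
      have hm := hmono j ((σ ^ (k - 1)) j) hs'
      have heq : (σ ^ k) j = σ ((σ ^ (k - 1)) j) := by
        conv_lhs => rw [show k = (k - 1) + 1 by omega]
        rw [pow_succ']
        rfl
      rw [hj', heq]
      exact hm
  by_cases hj'D : j' ∈ D
  · have h1 : Dᶜ.card = t := by rw [Finset.card_compl, hDcard, Fintype.card_fin]; omega
    have hfe := hfeas j' Dᶜ h1 (by simp [hj'D])
    rw [compl_compl] at hfe
    exact le_trans hks hfe
  · set E : Finset (Fin n) := insert j' (D.erase (σ j)) with hE
    have hj'E : j' ∉ D.erase (σ j) := fun h => hj'D (Finset.mem_of_mem_erase h)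
    have hEcard : E.card = n - t := by
      rw [hE, Finset.card_insert_of_notMem hj'E, Finset.card_erase_of_mem hσjD,
        hDcard]
      omega
    have h1 : Eᶜ.card = t := by rw [Finset.card_compl, hEcard, Fintype.card_fin]; omega
    have hfe := hfeas j' Eᶜ h1 (by simp [hE])
    rw [compl_compl] at hfe
    have hsumE : ∑ i ∈ E, v i ≤ ∑ i ∈ D, v i := by
      rw [hE, Finset.sum_insert hj'E,
        ← Finset.add_sum_erase D v hσjD]
      exact add_le_add hvj' (le_refl _)
    exact le_trans hks (le_trans hfe hsumE)
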